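/- Let a > 0, b > 0 be real numbers, set c = (1 + e^{a b})/e^{a b} and d = 1/(1 + e^{a b}), define U(P) = c·(1/(1 + e^{-a(P-b)}) − d), and let S(P) denote the derivative of log U at P for P > 0. Then for every p > 0 there exists a unique P > 0 such that S(P) = p; that is, S is a strictly decreasing bijection from (0, ∞) onto (0, ∞). -/

import Mathlib

open Real Set

set_option maxHeartbeats 1000000 in
/-- The slope `S = (log U)'` of the sigmoidal-like utility is a strictly decreasing
bijection from `(0, ∞)` onto `(0, ∞)`: it is strictly antitone on `(0, ∞)` and for
every `p > 0` there is a unique `P > 0` with `S(P) = p`. -/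
theorem slope_strictAnti_bijective
    (a b c d : ℝ) (ha : 0 < a) (hb : 0 < b)
    (hc : c = (1 + Real.exp (a * b)) / Real.exp (a * b))
    (hd : d = 1 / (1 + Real.exp (a * b)))
    (U : ℝ → ℝ)
    (hU : ∀ P : ℝ, U P = c * (1 / (1 + Real.exp (-a * (P - b))) - d))
    (S : ℝ → ℝ) (hS : ∀ P : ℝ, S P = deriv (fun P => Real.log (U P)) P) :
    StrictAntiOn S (Ioi (0 : ℝ)) ∧
    (∀ P : ℝ, 0 < P → 0 < S P) ∧
    (∀ p : ℝ, 0 < p → ∃! P : ℝ, 0 < P ∧ S P = p) := by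
  set E := Real.exp (a * b) with hEdef
  have hE : (0:ℝ) < E := Real.exp_pos _
  -- simplified utility
  have hUF : ∀ P : ℝ, U P = (1 - Real.exp (-(a*P))) / (1 + E * Real.exp (-(a*P))) := by
    intro P
    have hEq : Real.exp (-a * (P - b)) = E * Real.exp (-(a*P)) := by
      rw [hEdef, ← Real.exp_add]; ring_nf
    have h2 : (0:ℝ) < Real.exp (-(a*P)) := Real.exp_pos _
    have h3 : (0:ℝ) < 1 + E * Real.exp (-(a*P)) := by positivity
    have h4 : (0:ℝ) < 1 + E := by positivity
    rw [hU, hc, hd, hEq, hEdef]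
    have hE' : (0:ℝ) < Real.exp (a*b) := Real.exp_pos _
    field_simp
    ring
  -- explicit slope
  set g : ℝ → ℝ := fun P => a * Real.exp (-(a*P)) / (1 - Real.exp (-(a*P)))
      + a * E * Real.exp (-(a*P)) / (1 + E * Real.exp (-(a*P))) with hgdef
  have ht1 : ∀ P : ℝ, 0 < P → Real.exp (-(a*P)) < 1 := by
    intro P hP; rw [Real.exp_lt_one_iff]; nlinarith
  have hSg : ∀ P : ℝ, 0 < P → S P = g P := by
    intro P hP
    have hlog : ∀ Q : ℝ, 0 < Q →
        Real.log (U Q) = Real.log (1 - Real.exp (-(a*Q))) - Real.log (1 + E * Real.exp (-(a*Q))) := by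
      intro Q hQ
      have h1 : (0:ℝ) < 1 - Real.exp (-(a*Q)) := by have := ht1 Q hQ; linarith
      have h2 : (0:ℝ) < 1 + E * Real.exp (-(a*Q)) := by positivity
      rw [hUF, Real.log_div h1.ne' h2.ne']
    have hEv : (fun Q => Real.log (U Q)) =ᶠ[nhds P]
        (fun Q => Real.log (1 - Real.exp (-(a*Q))) - Real.log (1 + E * Real.exp (-(a*Q)))) :=
      Filter.eventuallyEq_of_mem (isOpen_Ioi.mem_nhds hP) fun Q hQ => hlog Q hQ
    have hder : HasDerivAt
        (fun Q => Real.log (1 - Real.exp (-(a*Q))) - Real.log (1 + E * Real.exp (-(a*Q)))) (g P) P := by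
      have ht1' := ht1 P hP
      have ht0 : (0:ℝ) < Real.exp (-(a*P)) := Real.exp_pos _
      have hin : HasDerivAt (fun P : ℝ => -(a*P)) (-a) P := by
        simpa using ((hasDerivAt_id P).const_mul a).fun_neg
      have hexp : HasDerivAt (fun P : ℝ => Real.exp (-(a*P))) (Real.exp (-(a*P)) * (-a)) P :=
        hin.exp
      have h1 : HasDerivAt (fun P : ℝ => 1 - Real.exp (-(a*P))) (-(Real.exp (-(a*P)) * (-a))) P := by
        simpa using (hasDerivAt_const P (1:ℝ)).fun_sub hexp
      have h2 : HasDerivAt (fun P : ℝ => 1 + E * Real.exp (-(a*P))) (E * (Real.exp (-(a*P)) * (-a))) P := by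
        simpa using (hasDerivAt_const P (1:ℝ)).fun_add (hexp.const_mul E)
      have hne1 : 1 - Real.exp (-(a*P)) ≠ 0 := by nlinarith
      have hne2 : 1 + E * Real.exp (-(a*P)) ≠ 0 := by nlinarith
      have := (h1.log hne1).fun_sub (h2.log hne2)
      refine this.congr_deriv ?_
      rw [hgdef]
      field_simp
      ring
    rw [hS, hEv.deriv_eq, hder.deriv]
  -- strict antitonicity of g
  have hganti : StrictAntiOn g (Ioi (0:ℝ)) := by
    intro P1 h1 P2 h2 h12
    simp only [mem_Ioi] at h1 h2
    set t1 := Real.exp (-(a*P1)) with ht1d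
    set t2 := Real.exp (-(a*P2)) with ht2d
    have htlt : t2 < t1 := by
      apply Real.exp_lt_exp.2; nlinarith
    have ht2p : (0:ℝ) < t2 := Real.exp_pos _
    have ht11 : t1 < 1 := ht1 P1 h1
    have hd1 : (0:ℝ) < 1 - t1 := by linarith
    have hd2 : (0:ℝ) < 1 - t2 := by linarith
    have he1 : (0:ℝ) < 1 + E * t1 := by nlinarith
    have he2 : (0:ℝ) < 1 + E * t2 := by nlinarith
    have hA : a * t2 / (1 - t2) < a * t1 / (1 - t1) := by
      rw [div_lt_div_iff₀ hd2 hd1]; nlinarith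
    have hB : a * E * t2 / (1 + E * t2) ≤ a * E * t1 / (1 + E * t1) := by
      rw [div_le_div_iff₀ he2 he1]
      nlinarith [mul_nonneg (mul_nonneg ha.le hE.le) (sub_nonneg.2 htlt.le)]
    simp only [hgdef]
    linarith
  have hSanti : StrictAntiOn S (Ioi (0:ℝ)) := by
    intro P1 h1 P2 h2 h12
    rw [hSg P1 h1, hSg P2 h2]; exact hganti h1 h2 h12
  have hSpos : ∀ P : ℝ, 0 < P → 0 < S P := by
    intro P hP
    rw [hSg P hP, hgdef]
    have ht0 : (0:ℝ) < Real.exp (-(a*P)) := Real.exp_pos _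
    have := ht1 P hP
    have hd1 : (0:ℝ) < 1 - Real.exp (-(a*P)) := by linarith
    have he1 : (0:ℝ) < 1 + E * Real.exp (-(a*P)) := by nlinarith
    positivity
  refine ⟨hSanti, hSpos, ?_⟩
  intro p hp
  -- low point: S P_lo > p
  set t1 : ℝ := p / (a + p) with ht1d
  have ht1p : 0 < t1 := by positivity
  have ht1lt : t1 < 1 := by rw [div_lt_one (by linarith)]; linarith
  set Plo : ℝ := -(Real.log t1) / a with hPlod
  have hPlopos : 0 < Plo := by
    have h := Real.log_neg ht1p ht1lt
    rw [hPlod]; exact div_pos (by linarith) ha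
  have hexplo : Real.exp (-(a * Plo)) = t1 := by
    rw [hPlod]
    rw [show -(a * (-(Real.log t1) / a)) = Real.log t1 by field_simp]
    exact Real.exp_log ht1p
  have hSlo : p < S Plo := by
    rw [hSg Plo hPlopos, hgdef]
    simp only [hexplo]
    have hfirst : a * t1 / (1 - t1) = p := by
      rw [ht1d]; have h0 : a + p ≠ 0 := by positivity
      field_simp
      rw [show a + p - p = a by ring, div_self ha.ne']
    have hpos2 : 0 < a * E * t1 / (1 + E * t1) := by
      have : (0:ℝ) < 1 + E * t1 := by nlinarith
      positivity
    linarith [hfirst]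
  -- high point: S Phi ≤ p
  set t0 : ℝ := min (1/2) (p / (a * (2 + E))) with ht0d
  have ht0p : 0 < t0 := by
    apply lt_min (by norm_num); positivity
  have ht0le : t0 ≤ 1/2 := min_le_left _ _
  have ht0le2 : t0 ≤ p / (a * (2 + E)) := min_le_right _ _
  set Phi : ℝ := -(Real.log t0) / a with hPhid
  have hPhipos : 0 < Phi := by
    have h := Real.log_neg ht0p (by linarith)
    rw [hPhid]; exact div_pos (by linarith) ha
  have hexphi : Real.exp (-(a * Phi)) = t0 := by
    rw [hPhid, show -(a * (-(Real.log t0) / a)) = Real.log t0 by field_simp]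
    exact Real.exp_log ht0p
  have hShi : S Phi ≤ p := by
    rw [hSg Phi hPhipos, hgdef]
    simp only [hexphi]
    have hd1 : (0:ℝ) < 1 - t0 := by linarith
    have he1 : (0:ℝ) < 1 + E * t0 := by nlinarith
    have hA : a * t0 / (1 - t0) ≤ 2 * (a * t0) := by
      rw [div_le_iff₀ hd1]
      nlinarith [mul_nonneg (mul_nonneg ha.le ht0p.le) (by linarith : (0:ℝ) ≤ 1 - 2*t0)]
    have hB : a * E * t0 / (1 + E * t0) ≤ a * E * t0 := by
      rw [div_le_iff₀ he1]
      nlinarith [mul_nonneg (mul_nonneg (mul_nonneg ha.le hE.le) ht0p.le) (mul_nonneg hE.le ht0p.le)]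
    have hbound : a * (2 + E) * t0 ≤ p := by
      have h0 : (0:ℝ) < a * (2 + E) := by positivity
      calc a * (2 + E) * t0 ≤ a * (2 + E) * (p / (a * (2 + E))) := by
            apply mul_le_mul_of_nonneg_left ht0le2 (le_of_lt h0)
        _ = p := by field_simp
    linarith
  -- ordering
  have hord : Plo ≤ Phi := by
    by_contra hcon
    push_neg at hcon
    have := hSanti (mem_Ioi.2 hPhipos) (mem_Ioi.2 hPlopos) hcon
    linarith
  -- continuity of S on the interval
  have hcont : ContinuousOn S (Icc Plo Phi) := by
    have hsub : Icc Plo Phi ⊆ Ioi (0:ℝ) := fun x hx => lt_of_lt_of_le hPlopos hx.1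
    have hc0 : Continuous fun x : ℝ => Real.exp (-(a*x)) :=
      Real.continuous_exp.comp ((continuous_const.mul continuous_id).neg)
    have hgcont : ContinuousOn g (Icc Plo Phi) := by
      rw [hgdef]
      apply ContinuousOn.add
      · apply ContinuousOn.div
        · exact (continuous_const.mul hc0).continuousOn
        · exact (continuous_const.sub hc0).continuousOn
        · intro x hx
          have hx0 := hsub hx
          have := ht1 x hx0
          intro h; nlinarith [Real.exp_pos (-(a*x))]
      · apply ContinuousOn.div
        · exact (continuous_const.mul hc0).continuousOn
        · exact (continuous_const.add (continuous_const.mul hc0)).continuousOn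
        · intro x hx
          have := Real.exp_pos (-(a*x))
          intro h; nlinarith
    exact hgcont.congr fun x hx => hSg x (hsub hx)
  have hmem : p ∈ Icc (S Phi) (S Plo) := ⟨hShi, le_of_lt hSlo⟩
  obtain ⟨P, hPmem, hPval⟩ := intermediate_value_Icc' hord hcont hmem
  have hPpos : 0 < P := lt_of_lt_of_le hPlopos hPmem.1
  refine ⟨P, ⟨hPpos, hPval⟩, ?_⟩
  intro Q ⟨hQpos, hQval⟩
  exact hSanti.injOn (mem_Ioi.2 hQpos) (mem_Ioi.2 hPpos) (by rw [hQval, hPval])
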